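/- Fix integers a, b ≥ 1 and let M₁₁, M₁₂, M₂₁, M₂₂ ∈ ℤ[q] be the rank-matrix entries of the oriented box poset B_{a×b}, defined combinatorially below. Let B be the 2×2 matrix with these entries and let U = [[q,1],[0,1]]. Then for every s ≥ 1 and every tuple d = (d_1,…,d_s) of natural numbers, the polynomial trace(U^{d_1}·B·U^{d_2}·B···U^{d_s}·B) is N-palindromic, where N = d_1 + … + d_s + s·a·b; that is, its natDegree is at most N and its coefficient of q^j equals its coefficient of q^{N−j} for all 0 ≤ j ≤ N. -/

import Mathlib

open Polynomial

/-- A polynomial `p ∈ ℤ[q]` is `N`-palindromic if `natDegree p ≤ N` and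
`coeff j = coeff (N - j)` for all `0 ≤ j ≤ N`. -/
def IsPalindromic (p : Polynomial ℤ) (d : ℕ) : Prop :=
  p.natDegree ≤ d ∧ ∀ j ≤ d, p.coeff j = p.coeff (d - j)

/-- The lower sets of the box poset `Fin a × Fin b` with the componentwise order. -/
def boxLowerSets (a b : ℕ) : Finset (Finset (Fin a × Fin b)) :=
  Finset.univ.filter (fun I =>
    ∀ p ∈ I, ∀ p' : Fin a × Fin b, p'.1 ≤ p.1 → p'.2 ≤ p.2 → p' ∈ I)

/-- Partial rank polynomial of the box poset: `∑ q^|I|` over lower sets `I`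
satisfying the constraint `P`. -/
noncomputable def boxEntry (a b : ℕ) (P : Finset (Fin a × Fin b) → Prop)
    [DecidablePred P] : Polynomial ℤ :=
  ∑ I ∈ (boxLowerSets a b).filter P, X ^ I.card

namespace PalAux

open Matrix MvPolynomial

/-! ### Generalities: trace and similarity -/

lemma swap_prod' {R : Type*} [CommRing R] (S : Matrix (Fin 2) (Fin 2) R) (l : List ℕ)
    (f g : ℕ → Matrix (Fin 2) (Fin 2) R)
    (h : ∀ e ∈ l, S * f e = (g e)ᵀ * S) :
    S * (l.map f).prod = ((l.reverse.map g).prod)ᵀ * S := by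
  induction l with
  | nil => simp
  | cons x t ih =>
    have hx := h x List.mem_cons_self
    have ht := ih (fun e he => h e (List.mem_cons_of_mem _ he))
    rw [List.map_cons, List.prod_cons, ← mul_assoc, hx, mul_assoc, ht,
      List.reverse_cons, List.map_append, List.prod_append, List.map_singleton,
      List.prod_singleton, Matrix.transpose_mul, mul_assoc]

lemma trace_eq_of_swap {R : Type*} [CommRing R] [IsDomain R]
    {S W W' : Matrix (Fin 2) (Fin 2) R} (hd : S.det ≠ 0)
    (h : S * W = W'ᵀ * S) : W.trace = W'.trace := by
  have h2 : S * W * S.adjugate = W'ᵀ * (S.det • (1 : Matrix (Fin 2) (Fin 2) R)) := by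
    rw [h, mul_assoc, Matrix.mul_adjugate]
  have h3 : (S * W * S.adjugate).trace
      = (W'ᵀ * (S.det • (1 : Matrix (Fin 2) (Fin 2) R))).trace := by rw [h2]
  rw [Matrix.mul_smul, mul_one, Matrix.trace_smul, Matrix.trace_transpose,
    mul_assoc, Matrix.trace_mul_comm] at h3
  rw [mul_assoc, Matrix.adjugate_mul, Matrix.mul_smul, mul_one, Matrix.trace_smul] at h3
  exact mul_left_cancel₀ hd (by simpa [smul_eq_mul] using h3)

lemma prod_shiftB {R : Type*} [CommRing R] (A B : Matrix (Fin 2) (Fin 2) R) (l : List ℕ) :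
    (l.map fun e => B * A ^ e).prod * B = B * (l.map fun e => A ^ e * B).prod := by
  induction l with
  | nil => simp
  | cons x t ih =>
    simp only [List.map_cons, List.prod_cons]
    rw [mul_assoc, ih, ← mul_assoc, ← mul_assoc, ← mul_assoc]

lemma trace_prod_BA_eq {R : Type*} [CommRing R] (A B : Matrix (Fin 2) (Fin 2) R) (l : List ℕ) :
    ((l.map fun e => B * A ^ e).prod).trace = ((l.map fun e => A ^ e * B).prod).trace := by
  cases l with
  | nil => rfl
  | cons x t =>
    simp only [List.map_cons, List.prod_cons]
    rw [mul_assoc, Matrix.trace_mul_comm, mul_assoc, prod_shiftB, ← mul_assoc]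

/-! ### The universal reversal argument for 2×2 matrices -/

lemma transpose_fin2 {α : Type*} (a b c d : α) : (!![a,b;c,d])ᵀ = !![a,c;b,d] := by
  rw [Matrix.eta_fin_two (!![a,b;c,d])ᵀ]
  simp

lemma fin2_ext {α : Type*} {a b c d e f g h : α}
    (h1 : a = e) (h2 : b = f) (h3 : c = g) (h4 : d = h) :
    !![a,b;c,d] = !![e,f;g,h] := by rw [h1, h2, h3, h4]

abbrev R0 := MvPolynomial (Fin 8) ℤ

noncomputable def GA : Matrix (Fin 2) (Fin 2) R0 := !![X 0, X 1; X 2, X 3]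
noncomputable def GB : Matrix (Fin 2) (Fin 2) R0 := !![X 4, X 5; X 6, X 7]
noncomputable def GS : Matrix (Fin 2) (Fin 2) R0 :=
  !![(X 0 - X 3) * X 6 - X 2 * (X 4 - X 7), X 1 * X 6 - X 2 * X 5;
     X 1 * X 6 - X 2 * X 5, (X 0 - X 3) * X 5 - (X 4 - X 7) * X 1]

lemma GS_GA : GS * GA = GAᵀ * GS := by
  rw [GS, GA, transpose_fin2, Matrix.mul_fin_two, Matrix.mul_fin_two]
  exact fin2_ext (by ring) (by ring) (by ring) (by ring)

lemma GS_GB : GS * GB = GBᵀ * GS := by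
  rw [GS, GB, transpose_fin2, Matrix.mul_fin_two, Matrix.mul_fin_two]
  exact fin2_ext (by ring) (by ring) (by ring) (by ring)

def GSv : Fin 8 → ℤ := fun i => match i with
  | 0 => 2 | 1 => 1 | 2 => 0 | 3 => 1 | 4 => 1 | 5 => 2 | 6 => 3 | 7 => 4

lemma GS_det_ne : GS.det ≠ 0 := by
  intro h
  have h2 := congrArg (MvPolynomial.aeval GSv) h
  rw [Matrix.det_fin_two] at h2
  simp only [GS, Matrix.cons_val', Matrix.cons_val_zero, Matrix.cons_val_one, Matrix.head_cons,
    Matrix.empty_val', Matrix.cons_val_fin_one, Matrix.head_fin_const, _root_.map_sub,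
    _root_.map_mul, MvPolynomial.aeval_X, map_zero, Matrix.of_apply] at h2
  revert h2
  decide

lemma GS_pow (e : ℕ) : GS * GA ^ e = (GAᵀ) ^ e * GS := by
  induction e with
  | zero => simp
  | succ n ih =>
    rw [pow_succ, ← mul_assoc, ih, mul_assoc, GS_GA, pow_succ, mul_assoc]

lemma GS_word (e : ℕ) : GS * (GA ^ e * GB) = (GB * GA ^ e)ᵀ * GS := by
  rw [← mul_assoc, GS_pow, mul_assoc, GS_GB, Matrix.transpose_mul, Matrix.transpose_pow,
    mul_assoc]

lemma trace_reverse_R0 (l : List ℕ) :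
    ((l.map fun e => GA ^ e * GB).prod).trace
      = ((l.reverse.map fun e => GA ^ e * GB).prod).trace := by
  have h1 := swap_prod' GS l (fun e => GA ^ e * GB) (fun e => GB * GA ^ e)
    (fun e _ => GS_word e)
  have h2 := trace_eq_of_swap GS_det_ne h1
  rw [h2, trace_prod_BA_eq]

/-- Trace of a two-letter word in 2×2 matrices equals the trace of the reversed word. -/
lemma trace_reverse {R : Type*} [CommRing R] (A B : Matrix (Fin 2) (Fin 2) R) (l : List ℕ) :
    ((l.map fun e => A ^ e * B).prod).trace
      = ((l.reverse.map fun e => A ^ e * B).prod).trace := by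
  let ψ : R0 →+* R := (MvPolynomial.aeval
    (![A 0 0, A 0 1, A 1 0, A 1 1, B 0 0, B 0 1, B 1 0, B 1 1] : Fin 8 → R)).toRingHom
  have hA : (ψ.mapMatrix) GA = A := by
    rw [Matrix.eta_fin_two A]
    ext i j
    fin_cases i <;> fin_cases j <;>
      simp [GA, ψ, RingHom.mapMatrix_apply, Matrix.map_apply] <;> rfl
  have hB : (ψ.mapMatrix) GB = B := by
    rw [Matrix.eta_fin_two B]
    ext i j
    fin_cases i <;> fin_cases j <;>
      simp [GB, ψ, RingHom.mapMatrix_apply, Matrix.map_apply] <;> rfl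
  have htr : ∀ M : Matrix (Fin 2) (Fin 2) R0, (ψ.mapMatrix M).trace = ψ M.trace := by
    intro M
    simp [Matrix.trace, Matrix.diag, RingHom.mapMatrix_apply, Matrix.map_apply, map_add,
      Fin.sum_univ_two]
  have hword : ∀ e : ℕ, ψ.mapMatrix (GA ^ e * GB) = A ^ e * B := by
    intro e
    rw [_root_.map_mul, _root_.map_pow, hA, hB]
  have key := congrArg ψ (trace_reverse_R0 l)
  rw [← htr, ← htr, map_list_prod, map_list_prod, List.map_map, List.map_map] at key
  have hcomp : (⇑ψ.mapMatrix ∘ fun e => GA ^ e * GB) = (fun e => A ^ e * B) :=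
    funext fun e => hword e
  rw [hcomp] at key
  simpa using key

/-! ### Reflection of matrices of polynomials -/

abbrev M2 := Matrix (Fin 2) (Fin 2) (Polynomial ℤ)

def degLE (M : M2) (n : ℕ) : Prop := ∀ i j, (M i j).natDegree ≤ n

lemma degLE_mul {M N : M2} {m n : ℕ} (hM : degLE M m) (hN : degLE N n) :
    degLE (M * N) (m + n) := by
  intro i j
  rw [Matrix.mul_apply]
  apply natDegree_sum_le_of_forall_le
  intro k _
  exact natDegree_mul_le.trans (add_le_add (hM i k) (hN k j))

lemma degLE_pow {M : M2} {m : ℕ} (hM : degLE M m) (e : ℕ) : degLE (M ^ e) (e * m) := by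
  induction e with
  | zero =>
    intro i j
    rcases eq_or_ne i j with h | h <;>
      simp [pow_zero, Matrix.one_apply, h]
  | succ n ih =>
    rw [pow_succ]
    have := degLE_mul ih hM
    rwa [show n * m + m = (n+1) * m by ring] at this

lemma degLE_word (U B : M2) (m : ℕ) (hU : degLE U 1) (hB : degLE B m) (l : List ℕ) :
    degLE ((l.map fun e => U ^ e * B).prod) (l.sum + l.length * m) := by
  induction l with
  | nil =>
    intro i j
    rcases eq_or_ne i j with h | h <;>
      simp [Matrix.one_apply, h]
  | cons y u ihu =>
    simp only [List.map_cons, List.prod_cons, List.sum_cons, List.length_cons]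
    have := degLE_mul (degLE_mul (degLE_pow hU y) hB) ihu
    rwa [show y * 1 + m + (u.sum + u.length * m) = y + u.sum + (u.length + 1) * m by ring]
      at this

lemma reflect_sum' {ι : Type*} (s : Finset ι) (f : ι → Polynomial ℤ) (N : ℕ) :
    reflect N (∑ i ∈ s, f i) = ∑ i ∈ s, reflect N (f i) := by
  classical
  induction s using Finset.cons_induction with
  | empty => simp
  | cons x s hx ih => rw [Finset.sum_cons, Finset.sum_cons, reflect_add, ih]

noncomputable def mrev (n : ℕ) (M : M2) : M2 := M.map (reflect n)

lemma mrev_mul {M N : M2} {m n : ℕ} (hM : degLE M m) (hN : degLE N n) :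
    mrev (m + n) (M * N) = mrev m M * mrev n N := by
  refine Matrix.ext fun i j => ?_
  simp only [mrev, Matrix.map_apply, Matrix.mul_apply, reflect_sum']
  exact Finset.sum_congr rfl fun k _ => reflect_mul _ _ (hM i k) (hN k j)

lemma mrev_pow {M : M2} {m : ℕ} (hM : degLE M m) (e : ℕ) :
    mrev (e * m) (M ^ e) = (mrev m M) ^ e := by
  induction e with
  | zero =>
    refine Matrix.ext fun i j => ?_
    rcases eq_or_ne i j with h | h <;>
      simp [mrev, pow_zero, Matrix.one_apply, h, Matrix.map_apply]
  | succ n ih =>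
    have h1 : (n + 1) * m = n * m + m := by ring
    rw [h1, pow_succ, mrev_mul (degLE_pow hM n) hM, ih, pow_succ]

lemma trace_mrev (n : ℕ) (M : M2) : (mrev n M).trace = reflect n M.trace := by
  simp [Matrix.trace, Matrix.diag, mrev, Matrix.map_apply, Fin.sum_univ_two, reflect_add]

lemma mrev_list_prod (U B : M2) (m : ℕ) (hU : degLE U 1) (hB : degLE B m) (l : List ℕ) :
    mrev (l.sum + l.length * m) ((l.map fun e => U ^ e * B).prod)
      = (l.map fun e => (mrev 1 U) ^ e * (mrev m B)).prod := by
  induction l with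
  | nil =>
    refine Matrix.ext fun i j => ?_
    rcases eq_or_ne i j with h | h <;>
      simp [mrev, Matrix.one_apply, h, Matrix.map_apply]
  | cons x t ih =>
    have hfac : degLE (U ^ x * B) (x * 1 + m) := degLE_mul (degLE_pow hU x) hB
    have htail : degLE ((t.map fun e => U ^ e * B).prod) (t.sum + t.length * m) :=
      degLE_word U B m hU hB t
    simp only [List.map_cons, List.prod_cons, List.sum_cons, List.length_cons]
    have heq : x + t.sum + (t.length + 1) * m = (x * 1 + m) + (t.sum + t.length * m) := by ring
    rw [heq, mrev_mul hfac htail, ih, mrev_mul (degLE_pow hU x) hB, mrev_pow hU]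

lemma mrev_fin2 (n : ℕ) (p q r s : Polynomial ℤ) :
    mrev n !![p,q;r,s] = !![reflect n p, reflect n q; reflect n r, reflect n s] := by
  refine Matrix.ext fun i j => ?_
  fin_cases i <;> fin_cases j <;> simp [mrev, Matrix.map_apply]

/-! ### Conjugation bookkeeping -/

lemma transpose_list_prod {R : Type*} [CommRing R] (f : ℕ → Matrix (Fin 2) (Fin 2) R)
    (l : List ℕ) :
    (l.map fun e => (f e)ᵀ).prod = ((l.reverse.map f).prod)ᵀ := by
  induction l with
  | nil => simp
  | cons x t ih =>
    rw [List.map_cons, List.prod_cons, ih, List.reverse_cons, List.map_append,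
      List.prod_append, List.map_singleton, List.prod_singleton, Matrix.transpose_mul]

lemma conj_pow {R : Type*} [CommRing R] (P Q M : Matrix (Fin 2) (Fin 2) R)
    (hPQ : P * Q = 1) (hQP : Q * P = 1) (e : ℕ) :
    (P * M * Q) ^ e = P * M ^ e * Q := by
  induction e with
  | zero => simp [hPQ]
  | succ n ih =>
    rw [pow_succ, ih, pow_succ]
    simp only [← mul_assoc]
    rw [mul_assoc (P * M ^ n) Q P, hQP, mul_one]

lemma conj_mul {R : Type*} [CommRing R] (P Q M N : Matrix (Fin 2) (Fin 2) R)
    (hQP : Q * P = 1) :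
    (P * M * Q) * (P * N * Q) = P * (M * N) * Q := by
  simp only [← mul_assoc]
  rw [mul_assoc (P * M) Q P, hQP, mul_one]

lemma conj_list_prod {R : Type*} [CommRing R] (P Q : Matrix (Fin 2) (Fin 2) R)
    (hPQ : P * Q = 1) (hQP : Q * P = 1) (f : ℕ → Matrix (Fin 2) (Fin 2) R) (l : List ℕ) :
    (l.map fun e => P * f e * Q).prod = P * (l.map f).prod * Q := by
  induction l with
  | nil => simp [hPQ]
  | cons x t ih =>
    rw [List.map_cons, List.prod_cons, ih, List.map_cons, List.prod_cons]
    simp only [← mul_assoc]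
    rw [mul_assoc (P * f x) Q P, hQP, mul_one]

/-! ### Combinatorics of the box poset -/

lemma mem_boxLowerSets {a b : ℕ} {I : Finset (Fin a × Fin b)} :
    I ∈ boxLowerSets a b ↔
      ∀ p ∈ I, ∀ p' : Fin a × Fin b, p'.1 ≤ p.1 → p'.2 ≤ p.2 → p' ∈ I := by
  simp [boxLowerSets]

def ρ (a b : ℕ) : (Fin a × Fin b) ≃ (Fin a × Fin b) :=
  (Fin.revPerm).prodCongr (Fin.revPerm)

lemma ρ_apply {a b : ℕ} (z : Fin a × Fin b) : ρ a b z = (z.1.rev, z.2.rev) := rfl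

lemma ρ_symm {a b : ℕ} : (ρ a b).symm = ρ a b := by
  ext z <;> simp [ρ]

def φmap {a b : ℕ} (I : Finset (Fin a × Fin b)) : Finset (Fin a × Fin b) :=
  (Iᶜ).map (ρ a b).toEmbedding

lemma mem_φmap {a b : ℕ} (I : Finset (Fin a × Fin b)) (z : Fin a × Fin b) :
    z ∈ φmap I ↔ ρ a b z ∉ I := by
  rw [φmap, Finset.mem_map_equiv, ρ_symm, Finset.mem_compl]

lemma φmap_card {a b : ℕ} (I : Finset (Fin a × Fin b)) :
    (φmap I).card = a * b - I.card := by
  rw [φmap, Finset.card_map, Finset.card_compl]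
  congr 1
  simp [Finset.card_univ]

lemma φmap_φmap {a b : ℕ} (I : Finset (Fin a × Fin b)) : φmap (φmap I) = I := by
  ext z
  rw [mem_φmap, mem_φmap, not_not]
  simp [ρ_apply]

lemma φmap_lower {a b : ℕ} {I : Finset (Fin a × Fin b)} (hI : I ∈ boxLowerSets a b) :
    φmap I ∈ boxLowerSets a b := by
  rw [mem_boxLowerSets] at hI ⊢
  intro p hp p' h1 h2
  rw [mem_φmap] at hp ⊢
  intro hmem
  exact hp (hI _ hmem (ρ a b p) (Fin.rev_le_rev.mpr h1) (Fin.rev_le_rev.mpr h2))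

lemma card_le_ab {a b : ℕ} (I : Finset (Fin a × Fin b)) : I.card ≤ a * b := by
  have := Finset.card_le_univ I
  simpa [Finset.card_univ] using this

lemma reflect_boxEntry {a b : ℕ} (P Q : Finset (Fin a × Fin b) → Prop)
    [DecidablePred P] [DecidablePred Q]
    (h : ∀ I ∈ boxLowerSets a b, (P I ↔ Q (φmap I))) :
    reflect (a * b) (boxEntry a b P) = boxEntry a b Q := by
  rw [boxEntry, boxEntry, reflect_sum']
  refine Finset.sum_nbij' (fun I => φmap I) (fun J => φmap J) ?_ ?_ ?_ ?_ ?_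
  · intro I hI
    rw [Finset.mem_filter] at hI ⊢
    exact ⟨φmap_lower hI.1, (h I hI.1).mp hI.2⟩
  · intro J hJ
    rw [Finset.mem_filter] at hJ ⊢
    refine ⟨φmap_lower hJ.1, ?_⟩
    rw [h (φmap J) (φmap_lower hJ.1), φmap_φmap]
    exact hJ.2
  · intro I _; exact φmap_φmap I
  · intro J _; exact φmap_φmap J
  · intro I hI
    rw [reflect_monomial, revAt_le (card_le_ab I), φmap_card]

lemma boxEntry_congr {a b : ℕ} (P Q : Finset (Fin a × Fin b) → Prop)
    [DecidablePred P] [DecidablePred Q] (h : ∀ I, P I ↔ Q I) :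
    boxEntry a b P = boxEntry a b Q := by
  rw [boxEntry, boxEntry]
  apply Finset.sum_congr _ (fun _ _ => rfl)
  apply Finset.filter_congr
  intro I _
  exact (h I)

lemma boxEntry_split {a b : ℕ} (P R : Finset (Fin a × Fin b) → Prop)
    [DecidablePred P] [DecidablePred R] :
    boxEntry a b P
      = boxEntry a b (fun I => P I ∧ R I) + boxEntry a b (fun I => P I ∧ ¬ R I) := by
  rw [boxEntry, boxEntry, boxEntry, ← Finset.sum_filter_add_sum_filter_not
    ((boxLowerSets a b).filter P) R, Finset.filter_filter, Finset.filter_filter]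

lemma boxEntry_natDegree_le {a b : ℕ} (P : Finset (Fin a × Fin b) → Prop)
    [DecidablePred P] : (boxEntry a b P).natDegree ≤ a * b := by
  rw [boxEntry]
  apply natDegree_sum_le_of_forall_le
  intro I _
  rw [natDegree_X_pow]
  exact card_le_ab I

noncomputable def Pm : M2 := !![0,-1;-1,1]
noncomputable def Qm : M2 := !![-1,-1;-1,0]

lemma PmQm : Pm * Qm = 1 := by
  rw [Pm, Qm, Matrix.mul_fin_two, Matrix.one_fin_two]
  norm_num

lemma QmPm : Qm * Pm = 1 := by
  rw [Pm, Qm, Matrix.mul_fin_two, Matrix.one_fin_two]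
  norm_num

end PalAux

open Matrix

/-- `tr(U^{d₁}·B·U^{d₂}·B···U^{d_s}·B)` is `N`-palindromic, where `B` is the
rank matrix of the oriented box poset `B_{a×b}`, `U = [[q,1],[0,1]]` and
`N = d₁ + … + d_s + s·a·b`. -/
theorem trace_chainlink_product_palindromic
    (a b : ℕ) (ha : 1 ≤ a) (hb : 1 ≤ b)
    (xL xR : Fin a × Fin b)
    (hxL : xL = (⟨a - 1, by omega⟩, ⟨0, by omega⟩))
    (hxR : xR = (⟨0, by omega⟩, ⟨b - 1, by omega⟩))
    (B : Matrix (Fin 2) (Fin 2) (Polynomial ℤ))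
    (hB : B = !![boxEntry a b (fun I => xR ∈ I),
                 boxEntry a b (fun I => xR ∉ I);
                 boxEntry a b (fun I => xR ∈ I ∧ xL ∉ I),
                 boxEntry a b (fun I => xR ∉ I ∧ xL ∉ I)])
    (U : Matrix (Fin 2) (Fin 2) (Polynomial ℤ)) (hU : U = !![X, 1; 0, 1])
    (s : ℕ) (hs : 1 ≤ s) (d : Fin s → ℕ) :
    IsPalindromic ((List.ofFn fun i : Fin s => U ^ d i * B).prod.trace)
      ((∑ i, d i) + s * (a * b)) := by
  classical
  have hρR : PalAux.ρ a b xR = xL := by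
    rw [hxL, hxR, PalAux.ρ_apply]
    refine Prod.ext (Fin.ext ?_) (Fin.ext ?_) <;> simp [Fin.rev] <;> omega
  have hρL : PalAux.ρ a b xL = xR := by
    rw [hxL, hxR, PalAux.ρ_apply]
    refine Prod.ext (Fin.ext ?_) (Fin.ext ?_) <;> simp [Fin.rev] <;> omega
  subst hB hU
  set A00 := boxEntry a b (fun I => xR ∈ I) with hA00
  set A01 := boxEntry a b (fun I => xR ∉ I) with hA01
  set A10 := boxEntry a b (fun I => xR ∈ I ∧ xL ∉ I) with hA10
  set A11 := boxEntry a b (fun I => xR ∉ I ∧ xL ∉ I) with hA11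
  set C00 := boxEntry a b (fun I => xL ∉ I) with hC00def
  set C01 := boxEntry a b (fun I => xL ∈ I) with hC01def
  set C11 := boxEntry a b (fun I => xR ∈ I ∧ xL ∈ I) with hC11def
  -- reflections of the entries via the rotation-complementation bijection
  have hr00 : reflect (a*b) A00 = C00 := by
    rw [hA00, hC00def]
    exact PalAux.reflect_boxEntry _ _
      (fun I _ => by rw [PalAux.mem_φmap, hρL, not_not])
  have hr01 : reflect (a*b) A01 = C01 := by
    rw [hA01, hC01def]
    exact PalAux.reflect_boxEntry _ _
      (fun I _ => by rw [PalAux.mem_φmap, hρL])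
  have hr10 : reflect (a*b) A10 = A10 := by
    rw [hA10]
    exact PalAux.reflect_boxEntry _ _
      (fun I _ => by rw [PalAux.mem_φmap, PalAux.mem_φmap, hρR, hρL, not_not]; exact and_comm)
  have hr11 : reflect (a*b) A11 = C11 := by
    rw [hA11, hC11def]
    exact PalAux.reflect_boxEntry _ _
      (fun I _ => by rw [PalAux.mem_φmap, PalAux.mem_φmap, hρR, hρL]; exact and_comm)
  -- linear relations among the entries
  have hC00 : C00 = A10 + A11 := by
    rw [hC00def, hA10, hA11, PalAux.boxEntry_split (fun I => xL ∉ I) (fun I => xR ∈ I)]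
    rw [PalAux.boxEntry_congr (fun I => xL ∉ I ∧ xR ∈ I) (fun I => xR ∈ I ∧ xL ∉ I)
        (fun I => and_comm),
      PalAux.boxEntry_congr (fun I => xL ∉ I ∧ ¬ xR ∈ I) (fun I => xR ∉ I ∧ xL ∉ I)
        (fun I => and_comm)]
  have hT1 : boxEntry a b (fun _ => True) = C01 + C00 := by
    rw [hC01def, hC00def, PalAux.boxEntry_split (fun _ => True) (fun I => xL ∈ I)]
    rw [PalAux.boxEntry_congr (fun I => True ∧ xL ∈ I) (fun I => xL ∈ I) (fun I => by simp),
      PalAux.boxEntry_congr (fun I => True ∧ ¬ xL ∈ I) (fun I => xL ∉ I) (fun I => by simp)]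
  have hT2 : boxEntry a b (fun _ => True) = A00 + A01 := by
    rw [hA00, hA01, PalAux.boxEntry_split (fun _ => True) (fun I => xR ∈ I)]
    rw [PalAux.boxEntry_congr (fun I => True ∧ xR ∈ I) (fun I => xR ∈ I) (fun I => by simp),
      PalAux.boxEntry_congr (fun I => True ∧ ¬ xR ∈ I) (fun I => xR ∉ I) (fun I => by simp)]
  have hC01 : C01 = A00 + A01 - A10 - A11 := by linear_combination hT2 - hT1 - hC00
  have hsA : A00 = C11 + A10 := by
    rw [hA00, hA10, hC11def, PalAux.boxEntry_split (fun I => xR ∈ I) (fun I => xL ∈ I)]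
  have hC11 : C11 = A00 - A10 := by linear_combination hsA.symm
  -- conjugation identities
  have hconjB : PalAux.mrev (a*b) !![A00,A01;A10,A11]
      = (PalAux.Pm * !![A00,A01;A10,A11] * PalAux.Qm)ᵀ := by
    rw [PalAux.mrev_fin2, hr00, hr01, hr10, hr11, PalAux.Pm, PalAux.Qm,
      Matrix.mul_fin_two, Matrix.mul_fin_two, PalAux.transpose_fin2]
    exact PalAux.fin2_ext (by linear_combination hC00) (by linear_combination hC01)
      (by ring) (by linear_combination hC11)
  have hXr : reflect 1 (X : Polynomial ℤ) = 1 := by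
    simpa using reflect_monomial 1 1 (R := ℤ)
  have h1r : reflect 1 (1 : Polynomial ℤ) = X := by
    simpa using reflect_monomial 1 0 (R := ℤ)
  have hconjU : PalAux.mrev 1 !![(X : Polynomial ℤ),1;0,1]
      = (PalAux.Pm * !![(X : Polynomial ℤ),1;0,1] * PalAux.Qm)ᵀ := by
    rw [PalAux.mrev_fin2, hXr, h1r, reflect_zero, PalAux.Pm, PalAux.Qm,
      Matrix.mul_fin_two, Matrix.mul_fin_two, PalAux.transpose_fin2]
    exact PalAux.fin2_ext (by ring) (by ring) (by ring) (by ring)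
  -- degree bounds
  have hUdeg : PalAux.degLE !![(X : Polynomial ℤ),1;0,1] 1 := by
    intro i j
    fin_cases i <;> fin_cases j <;> simp
  have hBdeg : PalAux.degLE !![A00,A01;A10,A11] (a*b) := by
    intro i j
    fin_cases i <;> fin_cases j <;>
      simp only [Matrix.cons_val', Matrix.cons_val_zero, Matrix.cons_val_one,
        Matrix.head_cons, Matrix.empty_val', Matrix.cons_val_fin_one, Matrix.of_apply,
        Matrix.head_fin_const] <;>
      first
        | (rw [hA00]; exact PalAux.boxEntry_natDegree_le _)
        | (rw [hA01]; exact PalAux.boxEntry_natDegree_le _)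
        | (rw [hA10]; exact PalAux.boxEntry_natDegree_le _)
        | (rw [hA11]; exact PalAux.boxEntry_natDegree_le _)
  -- list bookkeeping
  set l := List.ofFn d with hl
  have hW : (List.ofFn fun i : Fin s =>
        (!![(X : Polynomial ℤ),1;0,1]) ^ d i * !![A00,A01;A10,A11])
      = l.map fun e => (!![(X : Polynomial ℤ),1;0,1]) ^ e * !![A00,A01;A10,A11] := by
    rw [hl, List.map_ofFn]
    rfl
  have hNl : (∑ i, d i) + s * (a*b) = l.sum + l.length * (a*b) := by
    rw [hl, List.sum_ofFn, List.length_ofFn]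
  rw [hW]
  -- the reflection fixes the trace
  have hrefl : reflect ((∑ i, d i) + s*(a*b))
      ((l.map fun e => (!![(X : Polynomial ℤ),1;0,1]) ^ e * !![A00,A01;A10,A11]).prod.trace)
      = (l.map fun e =>
          (!![(X : Polynomial ℤ),1;0,1]) ^ e * !![A00,A01;A10,A11]).prod.trace := by
    rw [hNl, ← PalAux.trace_mrev,
      PalAux.mrev_list_prod !![(X : Polynomial ℤ),1;0,1] !![A00,A01;A10,A11] (a*b)
        hUdeg hBdeg l]
    have hfac : ∀ e : ℕ, (PalAux.mrev 1 !![(X : Polynomial ℤ),1;0,1]) ^ e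
          * (PalAux.mrev (a*b) !![A00,A01;A10,A11])
        = (PalAux.Pm * (!![A00,A01;A10,A11]
            * (!![(X : Polynomial ℤ),1;0,1]) ^ e) * PalAux.Qm)ᵀ := by
      intro e
      rw [hconjU, hconjB, ← Matrix.transpose_pow,
        PalAux.conj_pow PalAux.Pm PalAux.Qm _ PalAux.PmQm PalAux.QmPm,
        ← Matrix.transpose_mul,
        PalAux.conj_mul PalAux.Pm PalAux.Qm _ _ PalAux.QmPm]
    simp only [hfac]
    rw [PalAux.transpose_list_prod
        (fun e => PalAux.Pm * (!![A00,A01;A10,A11]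
          * (!![(X : Polynomial ℤ),1;0,1]) ^ e) * PalAux.Qm) l,
      Matrix.trace_transpose,
      PalAux.conj_list_prod PalAux.Pm PalAux.Qm PalAux.PmQm PalAux.QmPm
        (fun e => !![A00,A01;A10,A11] * (!![(X : Polynomial ℤ),1;0,1]) ^ e) l.reverse,
      Matrix.trace_mul_comm, ← mul_assoc, PalAux.QmPm, one_mul,
      PalAux.trace_prod_BA_eq,
      PalAux.trace_reverse !![(X : Polynomial ℤ),1;0,1] !![A00,A01;A10,A11] l.reverse,
      List.reverse_reverse]
  constructor
  · rw [Matrix.trace_fin_two]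
    refine le_trans (natDegree_add_le _ _) ?_
    have hw := PalAux.degLE_word !![(X : Polynomial ℤ),1;0,1] !![A00,A01;A10,A11] (a*b)
      hUdeg hBdeg l
    rw [hNl]
    exact max_le (hw 0 0) (hw 1 1)
  · intro j hj
    conv_lhs => rw [← hrefl]
    rw [coeff_reflect, revAt_le hj]
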